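/- Let n be a positive integer and m a positive integer. Then ((-1)^{m+1}/4) · ( 2·Σ_{j=1}^{n-1} (-1)^j j^{2m} + (-1)^n n^{2m} ) · π^{2m+2}/(2m)! + (-1)^n · Σ_{k=1}^{m} (-1)^k n^{2k-1} · π^{2k}/(2k-1)! · λ(2m-2k+2) = 0. -/

import Mathlib

open Real Finset

/-- The Dirichlet lambda function at a natural-number argument `j`:
`λ(j) = ∑_{n=0}^∞ 1/(2n+1)^j`. -/
noncomputable def dirichletLambda (j : ℕ) : ℝ := ∑' n : ℕ, 1 / (2 * (n : ℝ) + 1) ^ j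

open PowerSeries

noncomputable def Bq : PowerSeries ℚ := bernoulliPowerSeries ℚ
noncomputable def Hq : PowerSeries ℚ := 2 * (rescale 2 Bq - Bq) + X

lemma coeff_Bq (j : ℕ) : coeff j Bq = bernoulli j / (Nat.factorial j : ℚ) := by
  simp [Bq, bernoulliPowerSeries]

lemma coeff_Hq (j : ℕ) :
    coeff j Hq = 2 * ((2:ℚ) ^ j - 1) * bernoulli j / (Nat.factorial j : ℚ)
      + (if j = 1 then 1 else 0) := by
  have h2 : (2 : PowerSeries ℚ) = C (R := ℚ) 2 := by
    exact (map_ofNat (C (R := ℚ)) 2).symm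
  simp only [Hq, map_add, h2, coeff_C_mul, map_sub, coeff_rescale, coeff_Bq, coeff_X]
  split_ifs <;> ring

lemma coeff_Hq_odd (j : ℕ) (hj : Odd j) : coeff j Hq = 0 := by
  rcases eq_or_ne j 1 with h | h
  · subst h; simp [coeff_Hq]; norm_num
  · rw [coeff_Hq, if_neg h, bernoulli_eq_bernoulli'_of_ne_one h,
      bernoulli'_eq_zero_of_odd hj (by rcases hj with ⟨t, ht⟩; omega)]
    simp

lemma coeff_Hq_zero : coeff 0 Hq = 0 := by simp [coeff_Hq]

lemma exp_ne : (exp ℚ - 1 : PowerSeries ℚ) ≠ 0 := by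
  intro h
  have := congrArg (coeff 1) h
  simp [coeff_exp] at this

lemma Hq_mul : Hq * (exp ℚ + 1) = X * (exp ℚ - 1) := by
  have hB : Bq * (exp ℚ - 1) = X := bernoulliPowerSeries_mul_exp_sub_one ℚ
  have hR : rescale (2:ℚ) Bq * (exp ℚ ^ 2 - 1) = 2 * X := by
    have h := congrArg (rescale (2:ℚ)) hB
    rw [map_mul, map_sub, map_one, rescale_X] at h
    have he : exp ℚ ^ 2 = rescale (2:ℚ) (exp ℚ) := by
      have := exp_pow_eq_rescale_exp (A := ℚ) 2
      push_cast at this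
      exact this
    have hc : (C (R := ℚ) 2 : PowerSeries ℚ) = 2 := map_ofNat (C (R := ℚ)) 2
    rw [he, ← hc]
    exact h
  apply mul_right_cancel₀ exp_ne
  simp only [Hq]
  linear_combination 2 * hR - 2 * (exp ℚ + 1) * hB

lemma Hq_mul' (n : ℕ) : (exp ℚ ^ (n+1) + exp ℚ ^ n) * Hq = X * (exp ℚ ^ (n+1) - exp ℚ ^ n) := by
  linear_combination (exp ℚ) ^ n * Hq_mul

lemma coeff_exp_pow (j k : ℕ) : coeff k (exp ℚ ^ j) = (j:ℚ)^k / (Nat.factorial k : ℚ) := by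
  rw [exp_pow_eq_rescale_exp, coeff_rescale, coeff_exp]
  simp
  ring

lemma extract (n m : ℕ) :
    ∑ i ∈ range (2*m+1+1),
      ((((n:ℚ)+1)^i + (n:ℚ)^i) / (Nat.factorial i : ℚ)) * coeff (2*m+1-i) Hq
    = ((n:ℚ)+1)^(2*m)/(Nat.factorial (2*m) : ℚ) - (n:ℚ)^(2*m)/(Nat.factorial (2*m) : ℚ) := by
  have h := congrArg (coeff (2*m+1)) (Hq_mul' n)
  rw [coeff_succ_X_mul, coeff_mul, Finset.Nat.sum_antidiagonal_eq_sum_range_succ_mk] at h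
  simp only [map_add, map_sub, coeff_exp_pow] at h
  push_cast at h
  rw [← h]
  apply Finset.sum_congr (by rw [Nat.succ_eq_add_one])
  intro i _
  push_cast
  ring

lemma sum_pairs (N : ℕ) (f : ℕ → ℚ) :
    ∑ i ∈ range (2*N), f i = ∑ k ∈ range N, (f (2*k) + f (2*k+1)) := by
  induction N with
  | zero => simp
  | succ N ih =>
      rw [show 2*(N+1) = 2*N+1+1 by ring, sum_range_succ, sum_range_succ, sum_range_succ, ih,
        add_assoc]

noncomputable def Lq (j : ℕ) : ℚ :=
  (-1)^(j+1) * (4^j - 1) * bernoulli (2*j) / (2 * (Nat.factorial (2*j) : ℚ))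

lemma stepA (n m : ℕ) (hm : 0 < m) :
    (-1:ℚ)^(m+1)/4 * (((n:ℚ)+1)^(2*m) - (n:ℚ)^(2*m)) * (1/(Nat.factorial (2*m) : ℚ))
    + (∑ k ∈ Icc 1 m, (-1:ℚ)^k * ((n:ℚ)+1)^(2*k-1) * (1/(Nat.factorial (2*k-1) : ℚ)) * Lq (m-k+1)
      + ∑ k ∈ Icc 1 m, (-1:ℚ)^k * (n:ℚ)^(2*k-1) * (1/(Nat.factorial (2*k-1) : ℚ)) * Lq (m-k+1)) = 0 := by
  have hex := extract n m
  rw [show 2*m+1+1 = 2*(m+1) by ring, sum_pairs (m+1)] at hex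
  -- even-index terms vanish
  have hzero : ∀ k ∈ range (m+1),
      ((((n:ℚ)+1)^(2*k) + (n:ℚ)^(2*k)) / (Nat.factorial (2*k) : ℚ)) * coeff (2*m+1-2*k) Hq
        + ((((n:ℚ)+1)^(2*k+1) + (n:ℚ)^(2*k+1)) / (Nat.factorial (2*k+1) : ℚ)) * coeff (2*m+1-(2*k+1)) Hq
      = ((((n:ℚ)+1)^(2*k+1) + (n:ℚ)^(2*k+1)) / (Nat.factorial (2*k+1) : ℚ)) * coeff (2*m-2*k) Hq := by
    intro k hk
    simp only [mem_range] at hk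
    rw [coeff_Hq_odd (2*m+1-2*k) ⟨m-k, by omega⟩, show 2*m+1-(2*k+1) = 2*m-2*k by omega]
    ring
  rw [Finset.sum_congr rfl hzero, sum_range_succ] at hex
  rw [show 2*m-2*m = 0 by omega, coeff_Hq_zero, mul_zero, add_zero] at hex
  -- rewrite goal sums to range m
  have hreindex : ∀ (g : ℕ → ℚ), ∑ k ∈ Icc 1 m, g k = ∑ k ∈ range m, g (k+1) := by
    intro g
    rw [← Finset.Ico_add_one_right_eq_Icc, Finset.sum_Ico_eq_sum_range]
    simp [add_comm]
  rw [hreindex, hreindex, ← Finset.sum_add_distrib]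
  have hterm : ∀ k ∈ range m,
      ((-1:ℚ)^(k+1) * ((n:ℚ)+1)^(2*(k+1)-1) * (1/(Nat.factorial (2*(k+1)-1) : ℚ)) * Lq (m-(k+1)+1)
       + (-1:ℚ)^(k+1) * (n:ℚ)^(2*(k+1)-1) * (1/(Nat.factorial (2*(k+1)-1) : ℚ)) * Lq (m-(k+1)+1))
      = (-1:ℚ)^m / 4 *
        (((((n:ℚ)+1)^(2*k+1) + (n:ℚ)^(2*k+1)) / (Nat.factorial (2*k+1) : ℚ)) * coeff (2*m-2*k) Hq) := by
    intro k hk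
    simp only [mem_range] at hk
    have h4 : (4:ℚ)^(m-k) = (2:ℚ)^(2*m-2*k) := by
      rw [show (4:ℚ) = 2^2 by norm_num, ← pow_mul, show 2*(m-k) = 2*m-2*k by omega]
    have hsgn : (-1:ℚ)^(k+1) * (-1:ℚ)^(m-k+1) = (-1:ℚ)^m := by
      rw [← pow_add, show k+1+(m-k+1) = m+2 by omega, pow_add]
      norm_num
    rw [show 2*(k+1)-1 = 2*k+1 by omega, show m-(k+1)+1 = m-k by omega]
    rw [Lq, show 2*(m-k) = 2*m-2*k by omega, coeff_Hq, if_neg (by omega), h4, ← hsgn]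
    ring
  rw [Finset.sum_congr rfl hterm, ← Finset.mul_sum, hex]
  ring

lemma keyQ (m : ℕ) (hm : 0 < m) : ∀ n : ℕ,
    (-1:ℚ)^(m+1)/4 * (2 * ∑ j ∈ Icc 1 (n-1), (-1:ℚ)^j * (j:ℚ)^(2*m)
        + (-1:ℚ)^n * (n:ℚ)^(2*m)) * (1/(Nat.factorial (2*m) : ℚ))
    + (-1:ℚ)^n * ∑ k ∈ Icc 1 m,
        (-1:ℚ)^k * (n:ℚ)^(2*k-1) * (1/(Nat.factorial (2*k-1) : ℚ)) * Lq (m-k+1) = 0 := by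
  intro n
  induction n with
  | zero =>
      have h1 : ∀ k ∈ Icc 1 m,
          (-1:ℚ)^k * ((0:ℕ):ℚ)^(2*k-1) * (1/(Nat.factorial (2*k-1) : ℚ)) * Lq (m-k+1) = 0 := by
        intro k hk
        simp only [mem_Icc] at hk
        rw [Nat.cast_zero, zero_pow (by omega)]
        ring
      rw [Finset.sum_eq_zero h1]
      norm_num
      exact Or.inl (by omega)
  | succ n ih =>
      have hσ : ∑ j ∈ Icc 1 n, (-1:ℚ)^j * (j:ℚ)^(2*m)
          = ∑ j ∈ Icc 1 (n-1), (-1:ℚ)^j * (j:ℚ)^(2*m) + (-1:ℚ)^n * (n:ℚ)^(2*m) := by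
        cases n with
        | zero => simp [zero_pow (by omega : 2*m ≠ 0)]
        | succ t =>
            rw [Finset.sum_Icc_succ_top (by omega : 1 ≤ t+1)]
            simp
      have st := stepA n m hm
      rw [Nat.add_sub_cancel]
      push_cast
      linear_combination ih + (-(-1:ℚ)^n) * st
        + (2*(-1:ℚ)^(m+1)/(4*(Nat.factorial (2*m) : ℚ))) * hσ

open Real in
noncomputable def dirichletLambda' (j : ℕ) : ℝ := ∑' n : ℕ, 1 / (2 * (n : ℝ) + 1) ^ j


lemma dirichletLambda_eq (k : ℕ) (hk : k ≠ 0) :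
    dirichletLambda (2*k) = π^(2*k) * ((Lq k : ℚ) : ℝ) := by
  have hZ := hasSum_zeta_nat hk
  set f : ℕ → ℝ := fun j : ℕ => 1 / (j : ℝ) ^ (2*k) with hf
  set Z : ℝ := (-1 : ℝ) ^ (k + 1) * (2 : ℝ) ^ (2 * k - 1) * π ^ (2 * k) *
        bernoulli (2 * k) / ((2*k).factorial : ℝ) with hZdef
  have he : HasSum (fun i : ℕ => f (2*i)) (((2:ℝ)^(2*k))⁻¹ * Z) := by
    have := hZ.mul_left (((2:ℝ)^(2*k))⁻¹)
    convert this using 2 with i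
    · rfl
    simp only [hf]
    push_cast
    rw [mul_pow, one_div, mul_inv, ← one_div]
    ring
  have hs : Summable (fun i : ℕ => f (2*i+1)) := by
    have hinj : Function.Injective (fun i : ℕ => 2*i+1) := by
      intro a b h
      simp only [] at h
      omega
    exact hZ.summable.comp_injective hinj
  obtain ⟨s, ho⟩ := hs
  have htot : HasSum f (((2:ℝ)^(2*k))⁻¹ * Z + s) := he.even_add_odd ho
  have hsum : Z = ((2:ℝ)^(2*k))⁻¹ * Z + s := hZ.unique htot
  have hlam : dirichletLambda (2*k) = s := by
    rw [dirichletLambda, ← ho.tsum_eq]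
    congr 1
    funext i
    simp only [hf]
    push_cast
    ring_nf
  rw [hlam]
  have hss : s = Z - ((2:ℝ)^(2*k))⁻¹ * Z := by linarith
  rw [hss, hZdef, Lq]
  have h2 : (2:ℝ)^(2*k-1) = 2^(2*k) / 2 := by
    rw [eq_div_iff (two_ne_zero' ℝ), ← pow_succ]
    congr 1
    omega
  push_cast
  rw [h2]
  have hfac : ((2*k).factorial : ℝ) ≠ 0 := by positivity
  have h2k : (2:ℝ)^(2*k) ≠ 0 := by positivity
  field_simp
  rw [show (4:ℝ)^k = (2:ℝ)^(2*k) by rw [show (4:ℝ) = 2^2 by norm_num, ← pow_mul]]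

theorem lambda_recurrence_integer_even (n m : ℕ) (hn : 0 < n) (hm : 0 < m) :
    (-1 : ℝ) ^ (m + 1) / 4 *
        (2 * ∑ j ∈ Finset.Icc 1 (n - 1), (-1 : ℝ) ^ j * (j : ℝ) ^ (2 * m) +
          (-1 : ℝ) ^ n * (n : ℝ) ^ (2 * m)) * (π ^ (2 * m + 2) / (Nat.factorial (2 * m))) +
      (-1 : ℝ) ^ n *
        ∑ k ∈ Finset.Icc 1 m,
          (-1 : ℝ) ^ k * (n : ℝ) ^ (2 * k - 1) * (π ^ (2 * k) / (Nat.factorial (2 * k - 1))) *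
            dirichletLambda (2 * m - 2 * k + 2) = 0 := by
  have h1 : ∑ k ∈ Finset.Icc 1 m,
      (-1 : ℝ) ^ k * (n : ℝ) ^ (2 * k - 1) * (π ^ (2 * k) / (Nat.factorial (2 * k - 1))) *
        dirichletLambda (2 * m - 2 * k + 2)
      = π ^ (2*m+2) * ∑ k ∈ Finset.Icc 1 m,
          (-1 : ℝ) ^ k * (n : ℝ) ^ (2 * k - 1) * (1 / ((Nat.factorial (2 * k - 1) : ℝ))) *
            ((Lq (m - k + 1) : ℚ) : ℝ) := by
    rw [Finset.mul_sum]
    apply Finset.sum_congr rfl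
    intro k hk
    simp only [mem_Icc] at hk
    rw [show 2*m-2*k+2 = 2*(m-k+1) by omega, dirichletLambda_eq (m-k+1) (by omega),
      show 2*m+2 = 2*k + 2*(m-k+1) by omega, pow_add]
    ring
  rw [h1]
  have key := keyQ m hm n
  have keyR := congrArg (fun q : ℚ => (q : ℝ)) key
  push_cast at keyR
  linear_combination (π:ℝ)^(2*m+2) * keyR
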